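/- Let f:[0,1] → ℝ be absolutely continuous with f(0) = f(1) = 0 and square-integrable derivative. Suppose w:[0,1] → ℝ is absolutely continuous with w(0) = 0, satisfies w(t) - w(s) ≥ -(f(t)-f(s))²/(t-s) for all 0 ≤ s < t ≤ 1, and w' + (f')² ≥ 0 a.e. Then (4/3)∫_0^1 (w'(t) + f'(t)²)^{3/2} dt ≥ (4/3)(∫_0^1 f'(t)² dt)^{3/2}. -/

import Mathlib

open MeasureTheory

/-- Lower bound for the geodesic rate function:
`(4/3)∫_0^1 (w' + (f')²)^{3/2} ≥ (4/3)(∫_0^1 (f')²)^{3/2}` for admissible weights `w`. -/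
theorem geodesic_rate_lower_bound (f f' w w' : ℝ → ℝ)
    (hf0 : f 0 = 0) (hf1 : f 1 = 0)
    (hfint : IntegrableOn f' (Set.Icc (0:ℝ) 1))
    (hfsq : IntegrableOn (fun t => (f' t)^2) (Set.Icc (0:ℝ) 1))
    (hfftc : ∀ s t : ℝ, 0 ≤ s → s ≤ t → t ≤ 1 → f t - f s = ∫ u in s..t, f' u)
    (hw0 : w 0 = 0)
    (hwint : IntegrableOn w' (Set.Icc (0:ℝ) 1))
    (hwftc : ∀ s t : ℝ, 0 ≤ s → s ≤ t → t ≤ 1 → w t - w s = ∫ u in s..t, w' u)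
    (hconstr : ∀ s t : ℝ, 0 ≤ s → s < t → t ≤ 1 →
      -(f t - f s)^2 / (t - s) ≤ w t - w s)
    (hpos : ∀ᵐ t ∂(volume.restrict (Set.Ioc (0:ℝ) 1)), 0 ≤ w' t + (f' t)^2) :
    ENNReal.ofReal ((4/3) * (∫ t in Set.Ioc (0:ℝ) 1, (f' t)^2) ^ ((3:ℝ)/2)) ≤
      (4/3 : ENNReal) * ∫⁻ t in Set.Ioc (0:ℝ) 1,
        ENNReal.ofReal (w' t + (f' t)^2) ^ ((3:ℝ)/2) := by
  have hsub : Set.Ioc (0:ℝ) 1 ⊆ Set.Icc (0:ℝ) 1 := Set.Ioc_subset_Icc_self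
  set g : ℝ → ℝ := fun t => w' t + (f' t)^2 with hg
  have hwI : IntegrableOn w' (Set.Ioc (0:ℝ) 1) := hwint.mono_set hsub
  have hfI : IntegrableOn (fun t => (f' t)^2) (Set.Ioc (0:ℝ) 1) := hfsq.mono_set hsub
  have hgI : IntegrableOn g (Set.Ioc (0:ℝ) 1) := hwI.add hfI
  -- w 1 ≥ 0
  have hw1 : 0 ≤ w 1 := by
    have := hconstr 0 1 le_rfl one_pos le_rfl
    simpa [hf0, hf1, hw0] using this
  -- integral of w' over Ioc equals w 1
  have hwint1 : ∫ t in Set.Ioc (0:ℝ) 1, w' t = w 1 := by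
    have := hwftc 0 1 le_rfl zero_le_one le_rfl
    rw [intervalIntegral.integral_of_le zero_le_one] at this
    simpa [hw0] using this.symm
  have hsplit : ∫ t in Set.Ioc (0:ℝ) 1, g t
      = w 1 + ∫ t in Set.Ioc (0:ℝ) 1, (f' t)^2 := by
    rw [show (fun t => g t) = fun t => w' t + (f' t)^2 from rfl,
      integral_add hwI hfI, hwint1]
  have hle : (∫ t in Set.Ioc (0:ℝ) 1, (f' t)^2) ≤ ∫ t in Set.Ioc (0:ℝ) 1, g t := by
    rw [hsplit]; linarith
  have hfsq_nonneg : 0 ≤ ∫ t in Set.Ioc (0:ℝ) 1, (f' t)^2 :=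
    integral_nonneg fun t => sq_nonneg _
  -- lintegral equality
  have hofReal : ENNReal.ofReal (∫ t in Set.Ioc (0:ℝ) 1, g t)
      = ∫⁻ t in Set.Ioc (0:ℝ) 1, ENNReal.ofReal (g t) :=
    ofReal_integral_eq_lintegral_ofReal hgI hpos
  set μ := volume.restrict (Set.Ioc (0:ℝ) 1)
  have hμ : μ Set.univ = 1 := by
    simp [μ, Measure.restrict_apply, Real.volume_Ioc]
  have hG : AEMeasurable (fun t => ENNReal.ofReal (g t)) μ :=
    hgI.aemeasurable.ennreal_ofReal
  -- Hölder with p = 3/2, q = 3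
  have hconj : ((3:ℝ)/2).HolderConjugate 3 := by
    constructor <;> norm_num
  have hHolder := ENNReal.lintegral_mul_le_Lp_mul_Lq μ hconj hG
    (aemeasurable_const (b := (1:ENNReal)))
  simp only [Pi.mul_apply, mul_one, ENNReal.one_rpow, lintegral_const, hμ, mul_one,
    ENNReal.one_rpow] at hHolder
  -- so ∫⁻ ofReal g ≤ (∫⁻ (ofReal g)^(3/2))^(2/3)
  set B := ∫⁻ t in Set.Ioc (0:ℝ) 1, ENNReal.ofReal (g t) ^ ((3:ℝ)/2) with hB
  have hHolder' : (∫⁻ t in Set.Ioc (0:ℝ) 1, ENNReal.ofReal (g t)) ≤ B ^ ((2:ℝ)/3) := by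
    have : (1:ℝ) / ((3:ℝ)/2) = (2:ℝ)/3 := by norm_num
    calc (∫⁻ t in Set.Ioc (0:ℝ) 1, ENNReal.ofReal (g t)) ≤ B ^ ((1:ℝ)/((3:ℝ)/2)) := hHolder
      _ = B ^ ((2:ℝ)/3) := by rw [this]
  have key : ENNReal.ofReal (∫ t in Set.Ioc (0:ℝ) 1, (f' t)^2) ≤ B ^ ((2:ℝ)/3) := by
    calc ENNReal.ofReal (∫ t in Set.Ioc (0:ℝ) 1, (f' t)^2)
        ≤ ENNReal.ofReal (∫ t in Set.Ioc (0:ℝ) 1, g t) := ENNReal.ofReal_le_ofReal hle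
      _ = ∫⁻ t in Set.Ioc (0:ℝ) 1, ENNReal.ofReal (g t) := hofReal
      _ ≤ B ^ ((2:ℝ)/3) := hHolder'
  have key2 : ENNReal.ofReal (∫ t in Set.Ioc (0:ℝ) 1, (f' t)^2) ^ ((3:ℝ)/2) ≤ B := by
    have := ENNReal.rpow_le_rpow key (by norm_num : (0:ℝ) ≤ 3/2)
    rwa [← ENNReal.rpow_mul, show ((2:ℝ)/3) * ((3:ℝ)/2) = 1 by norm_num,
      ENNReal.rpow_one] at this
  have hrw : ENNReal.ofReal ((4/3) * (∫ t in Set.Ioc (0:ℝ) 1, (f' t)^2) ^ ((3:ℝ)/2))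
      = (4/3 : ENNReal) * ENNReal.ofReal (∫ t in Set.Ioc (0:ℝ) 1, (f' t)^2) ^ ((3:ℝ)/2) := by
    rw [ENNReal.ofReal_mul (by norm_num : (0:ℝ) ≤ 4/3),
      ENNReal.ofReal_rpow_of_nonneg hfsq_nonneg (by norm_num : (0:ℝ) ≤ 3/2)]
    congr 1
    rw [ENNReal.ofReal_div_of_pos (by norm_num)]
    norm_num
  rw [hrw]
  exact mul_le_mul_right key2 _
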